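/- Let c ∈ ℝ, f : ℝ → ℝ continuous, F(r)=∫₀^r f, and let v : [a,b] × [0,T] → ℝ be a C^{2,1} solution of v_t = v_zz + c v_z + f(v) satisfying for every t ∈ [0,T]: v(a,t) = 0, v(b,t) = 1, v_z(a,t) = v_z(b,t) = 0. Define E(t) = ∫_a^b [½ v_z(z,t)² - F(v(z,t))] e^{cz} dz. Then E is differentiable on [0,T] with E'(t) = -∫_a^b v_t(z,t)² e^{cz} dz ≤ 0. -/

import Mathlib

open Filter Set intervalIntegral

open Topology MeasureTheory in
theorem stmt_16 (c a b T : ℝ) (hab : a < b) (hT : 0 < T)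
    (f : ℝ → ℝ) (hf : Continuous f)
    (v : ℝ → ℝ → ℝ)
    (hv_cont : ContinuousOn (fun p : ℝ × ℝ => v p.1 p.2) (Icc a b ×ˢ Icc 0 T))
    (hvz_cont : ContinuousOn (fun p : ℝ × ℝ => deriv (fun x => v x p.2) p.1)
      (Icc a b ×ˢ Icc 0 T))
    (hvzz_cont : ContinuousOn (fun p : ℝ × ℝ => deriv (deriv (fun x => v x p.2)) p.1)
      (Icc a b ×ˢ Icc 0 T))
    (hvt_cont : ContinuousOn (fun p : ℝ × ℝ => deriv (fun τ => v p.1 τ) p.2)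
      (Icc a b ×ˢ Icc 0 T))
    (hv_z : ∀ z ∈ Icc a b, ∀ t ∈ Icc (0:ℝ) T,
      DifferentiableAt ℝ (fun x => v x t) z ∧
      DifferentiableAt ℝ (deriv (fun x => v x t)) z)
    (hv_t : ∀ z ∈ Icc a b, ∀ t ∈ Icc (0:ℝ) T,
      DifferentiableAt ℝ (fun τ => v z τ) t)
    (heq : ∀ z ∈ Icc a b, ∀ t ∈ Icc (0:ℝ) T,
      deriv (fun τ => v z τ) t
        = deriv (deriv (fun x => v x t)) z + c * deriv (fun x => v x t) z + f (v z t))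
    (hba : ∀ t ∈ Icc (0:ℝ) T, v a t = 0 ∧ v b t = 1 ∧
      deriv (fun x => v x t) a = 0 ∧ deriv (fun x => v x t) b = 0) :
    ∀ t ∈ Icc (0:ℝ) T,
      HasDerivWithinAt
        (fun τ => ∫ z in a..b,
          ((deriv (fun x => v x τ) z) ^ 2 / 2 - ∫ s in (0:ℝ)..(v z τ), f s)
            * Real.exp (c * z))
        (-(∫ z in a..b, (deriv (fun τ => v z τ) t) ^ 2 * Real.exp (c * z)))
        (Icc 0 T) t ∧
      -(∫ z in a..b, (deriv (fun τ => v z τ) t) ^ 2 * Real.exp (c * z)) ≤ 0 := by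
  intro t ht
  -- slice continuity lemmas
  have comp_slice : ∀ (g : ℝ × ℝ → ℝ), ContinuousOn g (Icc a b ×ˢ Icc 0 T) →
      ∀ τ ∈ Icc (0:ℝ) T, ContinuousOn (fun z => g (z, τ)) (Icc a b) := by
    intro g hg τ hτ
    exact hg.comp ((continuous_id.prodMk continuous_const).continuousOn)
      (fun z hz => Set.mk_mem_prod hz hτ)
  have cV : ∀ τ ∈ Icc (0:ℝ) T, ContinuousOn (fun z => v z τ) (Icc a b) :=
    comp_slice _ hv_cont
  have cVz : ∀ τ ∈ Icc (0:ℝ) T,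
      ContinuousOn (fun z => deriv (fun x => v x τ) z) (Icc a b) :=
    comp_slice _ hvz_cont
  have cVzz : ∀ τ ∈ Icc (0:ℝ) T,
      ContinuousOn (fun z => deriv (deriv (fun x => v x τ)) z) (Icc a b) :=
    comp_slice _ hvzz_cont
  have cVt : ∀ τ ∈ Icc (0:ℝ) T,
      ContinuousOn (fun z => deriv (fun s => v z s) τ) (Icc a b) :=
    comp_slice _ hvt_cont
  have cfv : ∀ τ ∈ Icc (0:ℝ) T, ContinuousOn (fun z => f (v z τ)) (Icc a b) :=
    fun τ hτ => hf.comp_continuousOn (cV τ hτ)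
  have hFcont : Continuous (fun r => ∫ s in (0:ℝ)..r, f s) :=
    continuous_iff_continuousAt.2 fun r =>
      (hf.integral_hasStrictDerivAt 0 r).hasDerivAt.continuousAt
  have cFv : ∀ τ ∈ Icc (0:ℝ) T,
      ContinuousOn (fun z => ∫ s in (0:ℝ)..(v z τ), f s) (Icc a b) :=
    fun τ hτ => hFcont.comp_continuousOn (cV τ hτ)
  have cE : Continuous (fun z => Real.exp (c*z)) :=
    Real.continuous_exp.comp (continuous_const.mul continuous_id)
  have hI : ∀ {g : ℝ → ℝ}, ContinuousOn g (Icc a b) →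
      IntervalIntegrable g MeasureTheory.volume a b := by
    intro g hg
    exact (hg.mono (Set.uIcc_of_le hab.le).subset).intervalIntegrable
  -- bounds
  obtain ⟨M, hM⟩ := (isCompact_Icc.prod isCompact_Icc).exists_bound_of_continuousOn hvt_cont
  obtain ⟨Mf, hMf⟩ := (isCompact_Icc.prod isCompact_Icc).exists_bound_of_continuousOn
    (hf.comp_continuousOn hv_cont)
  have hmem0 : ((a, 0) : ℝ × ℝ) ∈ Icc a b ×ˢ Icc (0:ℝ) T :=
    Set.mk_mem_prod ⟨le_refl a, hab.le⟩ ⟨le_refl 0, hT.le⟩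
  have hM0 : 0 ≤ M := le_trans (norm_nonneg _) (hM _ hmem0)
  have hMf0 : 0 ≤ Mf := le_trans (norm_nonneg _) (hMf _ hmem0)
  have hMabs : ∀ z ∈ Icc a b, ∀ τ ∈ Icc (0:ℝ) T, |deriv (fun s => v z s) τ| ≤ M := by
    intro z hz τ hτ
    simpa [Real.norm_eq_abs] using hM (z, τ) (Set.mk_mem_prod hz hτ)
  have hMfabs : ∀ z ∈ Icc a b, ∀ τ ∈ Icc (0:ℝ) T, |f (v z τ)| ≤ Mf := by
    intro z hz τ hτ
    simpa [Real.norm_eq_abs] using hMf (z, τ) (Set.mk_mem_prod hz hτ)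
  -- mean value estimates in time
  have hMVTv : ∀ z ∈ Icc a b, ∀ τ ∈ Icc (0:ℝ) T, |v z τ - v z t| ≤ M * |τ - t| := by
    intro z hz τ hτ
    have := Convex.norm_image_sub_le_of_norm_hasDerivWithin_le
      (f := fun s => v z s) (f' := fun s => deriv (fun s' => v z s') s) (s := Icc (0:ℝ) T)
      (fun s hs => ((hv_t z hz s hs).hasDerivAt).hasDerivWithinAt)
      (fun s hs => by simpa [Real.norm_eq_abs] using hMabs z hz s hs)
      (convex_Icc 0 T) ht hτ
    simpa [Real.norm_eq_abs] using this
  have hMVTF : ∀ z ∈ Icc a b, ∀ τ ∈ Icc (0:ℝ) T,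
      |(∫ s in (0:ℝ)..(v z τ), f s) - ∫ s in (0:ℝ)..(v z t), f s| ≤ Mf * M * |τ - t| := by
    intro z hz τ hτ
    have := Convex.norm_image_sub_le_of_norm_hasDerivWithin_le
      (f := fun s => ∫ u in (0:ℝ)..(v z s), f u)
      (f' := fun s => f (v z s) * deriv (fun s' => v z s') s) (s := Icc (0:ℝ) T)
      (fun s hs => (((hf.integral_hasStrictDerivAt 0 (v z s)).hasDerivAt.comp s
        (hv_t z hz s hs).hasDerivAt)).hasDerivWithinAt)
      (fun s hs => by
        rw [Real.norm_eq_abs, abs_mul]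
        exact mul_le_mul (hMfabs z hz s hs) (hMabs z hz s hs) (abs_nonneg _) hMf0)
      (convex_Icc 0 T) ht hτ
    simpa [Real.norm_eq_abs] using this
  -- exp bound
  set K := Real.exp (c*a) + Real.exp (c*b) with hKdef
  have hKb : ∀ z ∈ Icc a b, Real.exp (c*z) ≤ K := by
    intro z hz
    rcases le_total 0 c with hc | hc
    · have : c*z ≤ c*b := mul_le_mul_of_nonneg_left hz.2 hc
      have := Real.exp_le_exp.2 this
      have hpos := Real.exp_pos (c*a)
      simp only [hKdef]; linarith
    · have : c*z ≤ c*a := mul_le_mul_of_nonpos_left hz.1 hc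
      have := Real.exp_le_exp.2 this
      have hpos := Real.exp_pos (c*b)
      simp only [hKdef]; linarith
  -- the key integration by parts identity
  have key : ∀ τ ∈ Icc (0:ℝ) T,
      (∫ z in a..b, ((deriv (fun x => v x τ) z) ^ 2 / 2 - ∫ s in (0:ℝ)..(v z τ), f s)
          * Real.exp (c * z)) -
      (∫ z in a..b, ((deriv (fun x => v x t) z) ^ 2 / 2 - ∫ s in (0:ℝ)..(v z t), f s)
          * Real.exp (c * z))
      = ∫ z in a..b,
          (-(v z τ - v z t) * ((deriv (fun s => v z s) τ + deriv (fun s => v z s) t)/2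
            - (f (v z τ) + f (v z t))/2)
           - ((∫ s in (0:ℝ)..(v z τ), f s) - ∫ s in (0:ℝ)..(v z t), f s))
          * Real.exp (c * z) := by
    intro τ hτ
    have hIτ : IntervalIntegrable (fun z =>
        ((deriv (fun x => v x τ) z) ^ 2 / 2 - ∫ s in (0:ℝ)..(v z τ), f s) * Real.exp (c * z))
        MeasureTheory.volume a b :=
      hI ((((cVz τ hτ).pow 2).div_const 2 |>.sub (cFv τ hτ)).mul cE.continuousOn)
    have hIt : IntervalIntegrable (fun z =>
        ((deriv (fun x => v x t) z) ^ 2 / 2 - ∫ s in (0:ℝ)..(v z t), f s) * Real.exp (c * z))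
        MeasureTheory.volume a b :=
      hI ((((cVz t ht).pow 2).div_const 2 |>.sub (cFv t ht)).mul cE.continuousOn)
    have hIuw : IntervalIntegrable (fun z =>
        (deriv (fun x => v x τ) z - deriv (fun x => v x t) z) *
        ((deriv (fun x => v x τ) z + deriv (fun x => v x t) z)/2 * Real.exp (c * z)))
        MeasureTheory.volume a b :=
      hI (((cVz τ hτ).sub (cVz t ht)).mul
        ((((cVz τ hτ).add (cVz t ht)).div_const 2).mul cE.continuousOn))
    have hIuw' : IntervalIntegrable (fun z =>
        (v z τ - v z t) *
        (((deriv (deriv (fun x => v x τ)) z + deriv (deriv (fun x => v x t)) z)/2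
          + c * ((deriv (fun x => v x τ) z + deriv (fun x => v x t) z)/2)) * Real.exp (c * z)))
        MeasureTheory.volume a b :=
      hI (((cV τ hτ).sub (cV t ht)).mul
        (((((cVzz τ hτ).add (cVzz t ht)).div_const 2).add
          (continuousOn_const.mul (((cVz τ hτ).add (cVz t ht)).div_const 2))).mul
          cE.continuousOn))
    have hIdF : IntervalIntegrable (fun z =>
        ((∫ s in (0:ℝ)..(v z τ), f s) - ∫ s in (0:ℝ)..(v z t), f s) * Real.exp (c * z))
        MeasureTheory.volume a b :=
      hI (((cFv τ hτ).sub (cFv t ht)).mul cE.continuousOn)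
    -- integration by parts
    have hexp : ∀ x : ℝ, HasDerivAt (fun z => Real.exp (c*z)) (c * Real.exp (c*x)) x := by
      intro x
      have := ((hasDerivAt_id x).const_mul c).exp
      simpa [mul_comm] using this
    have hparts := intervalIntegral.integral_deriv_mul_eq_sub
      (u := fun z => v z τ - v z t)
      (v := fun z => (deriv (fun x => v x τ) z + deriv (fun x => v x t) z)/2 * Real.exp (c * z))
      (u' := fun z => deriv (fun x => v x τ) z - deriv (fun x => v x t) z)
      (v' := fun z => ((deriv (deriv (fun x => v x τ)) z + deriv (deriv (fun x => v x t)) z)/2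
          + c * ((deriv (fun x => v x τ) z + deriv (fun x => v x t) z)/2)) * Real.exp (c * z))
      (a := a) (b := b)
      (fun z hz => by
        rw [Set.uIcc_of_le hab.le] at hz
        exact ((hv_z z hz τ hτ).1.hasDerivAt).sub ((hv_z z hz t ht).1.hasDerivAt))
      (fun z hz => by
        rw [Set.uIcc_of_le hab.le] at hz
        have h1 := (hv_z z hz τ hτ).2.hasDerivAt
        have h2 := (hv_z z hz t ht).2.hasDerivAt
        have h3 := ((h1.add h2).div_const 2).mul (hexp z)
        refine h3.congr_deriv ?_
        simp only [Pi.add_apply]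
        ring)
      (hI ((cVz τ hτ).sub (cVz t ht)))
      (hI (by
        refine ((((cVzz τ hτ).add (cVzz t ht)).div_const 2).add ?_).mul cE.continuousOn
        exact (ContinuousOn.mul continuousOn_const
          (((cVz τ hτ).add (cVz t ht)).div_const 2))))
    have hub : v b τ - v b t = 0 := by rw [(hba τ hτ).2.1, (hba t ht).2.1]; ring
    have hua : v a τ - v a t = 0 := by rw [(hba τ hτ).1, (hba t ht).1]; ring
    beta_reduce at hparts
    rw [hua, hub, zero_mul, zero_mul, sub_zero] at hparts
    rw [intervalIntegral.integral_add hIuw hIuw'] at hparts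
    -- rewrite the u·w' integral using the PDE
    have hQ : (∫ z in a..b, (v z τ - v z t) *
        (((deriv (deriv (fun x => v x τ)) z + deriv (deriv (fun x => v x t)) z)/2
          + c * ((deriv (fun x => v x τ) z + deriv (fun x => v x t) z)/2)) * Real.exp (c * z)))
        = ∫ z in a..b, (v z τ - v z t) *
          ((deriv (fun s => v z s) τ + deriv (fun s => v z s) t)/2
            - (f (v z τ) + f (v z t))/2) * Real.exp (c * z) := by
      apply intervalIntegral.integral_congr
      intro z hz
      rw [Set.uIcc_of_le hab.le] at hz
      have e1 := heq z hz τ hτ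
      have e2 := heq z hz t ht
      simp only
      rw [e1, e2]
      ring
    rw [hQ] at hparts
    -- assemble
    rw [← intervalIntegral.integral_sub hIτ hIt]
    have hsplit : (fun z =>
        ((deriv (fun x => v x τ) z) ^ 2 / 2 - ∫ s in (0:ℝ)..(v z τ), f s) * Real.exp (c * z)
        - ((deriv (fun x => v x t) z) ^ 2 / 2 - ∫ s in (0:ℝ)..(v z t), f s) * Real.exp (c * z))
        = fun z =>
        (deriv (fun x => v x τ) z - deriv (fun x => v x t) z) *
          ((deriv (fun x => v x τ) z + deriv (fun x => v x t) z)/2 * Real.exp (c * z))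
        - ((∫ s in (0:ℝ)..(v z τ), f s) - ∫ s in (0:ℝ)..(v z t), f s) * Real.exp (c * z) := by
      funext z; ring
    rw [hsplit, intervalIntegral.integral_sub hIuw hIdF]
    have huw_eq : (∫ z in a..b,
        (deriv (fun x => v x τ) z - deriv (fun x => v x t) z) *
          ((deriv (fun x => v x τ) z + deriv (fun x => v x t) z)/2 * Real.exp (c * z)))
        = -∫ z in a..b, (v z τ - v z t) *
          ((deriv (fun s => v z s) τ + deriv (fun s => v z s) t)/2
            - (f (v z τ) + f (v z t))/2) * Real.exp (c * z) := by
      linarith [hparts]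
    rw [huw_eq]
    have hIB : IntervalIntegrable (fun z => (v z τ - v z t) *
        ((deriv (fun s => v z s) τ + deriv (fun s => v z s) t)/2
          - (f (v z τ) + f (v z t))/2) * Real.exp (c * z)) MeasureTheory.volume a b :=
      hI ((((cV τ hτ).sub (cV t ht)).mul
        ((((cVt τ hτ).add (cVt t ht)).div_const 2).sub
          (((cfv τ hτ).add (cfv t ht)).div_const 2))).mul cE.continuousOn)
    have hphi : (fun z =>
        (-(v z τ - v z t) * ((deriv (fun s => v z s) τ + deriv (fun s => v z s) t)/2
            - (f (v z τ) + f (v z t))/2)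
          - ((∫ s in (0:ℝ)..(v z τ), f s) - ∫ s in (0:ℝ)..(v z t), f s))
          * Real.exp (c * z))
        = fun z => (-((v z τ - v z t) *
            ((deriv (fun s => v z s) τ + deriv (fun s => v z s) t)/2
              - (f (v z τ) + f (v z t))/2) * Real.exp (c * z)))
          - ((∫ s in (0:ℝ)..(v z τ), f s) - ∫ s in (0:ℝ)..(v z t), f s) * Real.exp (c * z) := by
      funext z; ring
    have hIBneg : IntervalIntegrable (fun z => -((v z τ - v z t) *
        ((deriv (fun s => v z s) τ + deriv (fun s => v z s) t)/2
          - (f (v z τ) + f (v z t))/2) * Real.exp (c * z))) MeasureTheory.volume a b :=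
      hI (ContinuousOn.neg ((((cV τ hτ).sub (cV t ht)).mul
        ((((cVt τ hτ).add (cVt t ht)).div_const 2).sub
          (((cfv τ hτ).add (cfv t ht)).div_const 2))).mul cE.continuousOn))
    rw [hphi, intervalIntegral.integral_sub hIBneg hIdF, intervalIntegral.integral_neg]
  -- filters
  set l : Filter ℝ := 𝓝[Icc (0:ℝ) T \ {t}] t with hldef
  have hl_ne : l ≤ 𝓝[≠] t := nhdsWithin_mono t (fun x hx => hx.2)
  have hl_Icc : l ≤ 𝓝[Icc (0:ℝ) T] t := nhdsWithin_mono t diff_subset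
  -- pointwise limits
  have hslopeV : ∀ z ∈ Icc a b,
      Tendsto (slope (fun s => v z s) t) l (𝓝 (deriv (fun s => v z s) t)) :=
    fun z hz => (hasDerivAt_iff_tendsto_slope.1 (hv_t z hz t ht).hasDerivAt).mono_left hl_ne
  have hslopeF : ∀ z ∈ Icc a b,
      Tendsto (slope (fun s => ∫ u in (0:ℝ)..(v z s), f u) t) l
        (𝓝 (f (v z t) * deriv (fun s => v z s) t)) := by
    intro z hz
    have hd : HasDerivAt (fun s => ∫ u in (0:ℝ)..(v z s), f u)
        (f (v z t) * deriv (fun s => v z s) t) t :=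
      (hf.integral_hasStrictDerivAt 0 (v z t)).hasDerivAt.comp t (hv_t z hz t ht).hasDerivAt
    exact (hasDerivAt_iff_tendsto_slope.1 hd).mono_left hl_ne
  have htendVt : ∀ z ∈ Icc a b,
      Tendsto (fun τ => deriv (fun s => v z s) τ) l (𝓝 (deriv (fun s => v z s) t)) := by
    intro z hz
    have h := (hvt_cont (z, t) (Set.mk_mem_prod hz ht)).comp
      ((continuous_const.prodMk continuous_id).continuousWithinAt)
      (fun τ hτ => Set.mk_mem_prod hz hτ)
    exact h.tendsto.mono_left hl_Icc
  have htendfv : ∀ z ∈ Icc a b,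
      Tendsto (fun τ => f (v z τ)) l (𝓝 (f (v z t))) := by
    intro z hz
    have h := ((hf.comp_continuousOn hv_cont) (z, t) (Set.mk_mem_prod hz ht)).comp
      ((continuous_const.prodMk continuous_id).continuousWithinAt)
      (fun τ hτ => Set.mk_mem_prod hz hτ)
    exact h.tendsto.mono_left hl_Icc
  -- dominated convergence
  have hIab : Set.uIoc a b ⊆ Icc a b := by
    rw [Set.uIoc_of_le hab.le]; exact Set.Ioc_subset_Icc_self
  have hDCT : Tendsto (fun τ => ∫ z in a..b, (τ - t)⁻¹ *
      ((-(v z τ - v z t) * ((deriv (fun s => v z s) τ + deriv (fun s => v z s) t)/2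
          - (f (v z τ) + f (v z t))/2)
        - ((∫ s in (0:ℝ)..(v z τ), f s) - ∫ s in (0:ℝ)..(v z t), f s))
        * Real.exp (c * z)))
      l (𝓝 (∫ z in a..b, -((deriv (fun s => v z s) t) ^ 2 * Real.exp (c * z)))) := by
    apply intervalIntegral.tendsto_integral_filter_of_dominated_convergence
      (bound := fun _ => (M * (M + Mf) + Mf * M) * K)
    · -- measurability
      filter_upwards [self_mem_nhdsWithin] with τ hτ
      have hτIcc : τ ∈ Icc (0:ℝ) T := hτ.1
      have hcont : ContinuousOn (fun z => (τ - t)⁻¹ *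
          ((-(v z τ - v z t) * ((deriv (fun s => v z s) τ + deriv (fun s => v z s) t)/2
              - (f (v z τ) + f (v z t))/2)
            - ((∫ s in (0:ℝ)..(v z τ), f s) - ∫ s in (0:ℝ)..(v z t), f s))
            * Real.exp (c * z))) (Icc a b) := by
        apply ContinuousOn.mul continuousOn_const
        apply ContinuousOn.mul _ cE.continuousOn
        exact ((((cV τ hτIcc).sub (cV t ht)).neg.mul
          ((((cVt τ hτIcc).add (cVt t ht)).div_const 2).sub
            (((cfv τ hτIcc).add (cfv t ht)).div_const 2))).sub
          ((cFv τ hτIcc).sub (cFv t ht)))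
      exact (hcont.mono hIab).aestronglyMeasurable measurableSet_uIoc
    · -- bound
      filter_upwards [self_mem_nhdsWithin] with τ hτ
      have hτIcc : τ ∈ Icc (0:ℝ) T := hτ.1
      have hτne : τ ≠ t := by
        intro h; exact hτ.2 (by simp [h])
      refine MeasureTheory.ae_of_all _ (fun z hz => ?_)
      have hzI : z ∈ Icc a b := hIab hz
      have h1 := hMVTv z hzI τ hτIcc
      have h2 := hMVTF z hzI τ hτIcc
      have h3 := hMabs z hzI τ hτIcc
      have h4 := hMabs z hzI t ht
      have h5 := hMfabs z hzI τ hτIcc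
      have h6 := hMfabs z hzI t ht
      have h7 := hKb z hzI
      have h8 := Real.exp_pos (c*z)
      have h9 : (0:ℝ) < |τ - t| := abs_pos.2 (sub_ne_zero.2 hτne)
      have hA : |(deriv (fun s => v z s) τ + deriv (fun s => v z s) t)/2
          - (f (v z τ) + f (v z t))/2| ≤ M + Mf := by
        have ha1 : |deriv (fun s => v z s) τ + deriv (fun s => v z s) t| ≤ 2*M := by
          calc |deriv (fun s => v z s) τ + deriv (fun s => v z s) t|
              ≤ |deriv (fun s => v z s) τ| + |deriv (fun s => v z s) t| := abs_add_le _ _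
            _ ≤ 2*M := by linarith
        have ha2 : |f (v z τ) + f (v z t)| ≤ 2*Mf := by
          calc |f (v z τ) + f (v z t)| ≤ |f (v z τ)| + |f (v z t)| := abs_add_le _ _
            _ ≤ 2*Mf := by linarith
        calc |(deriv (fun s => v z s) τ + deriv (fun s => v z s) t)/2
            - (f (v z τ) + f (v z t))/2|
            ≤ |(deriv (fun s => v z s) τ + deriv (fun s => v z s) t)/2|
              + |(f (v z τ) + f (v z t))/2| := abs_sub _ _
          _ = |deriv (fun s => v z s) τ + deriv (fun s => v z s) t|/2
              + |f (v z τ) + f (v z t)|/2 := by rw [abs_div, abs_div]; norm_num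
          _ ≤ M + Mf := by linarith
      have hXbound : |(-(v z τ - v z t) * ((deriv (fun s => v z s) τ
          + deriv (fun s => v z s) t)/2 - (f (v z τ) + f (v z t))/2)
          - ((∫ s in (0:ℝ)..(v z τ), f s) - ∫ s in (0:ℝ)..(v z t), f s))|
          ≤ (M * (M + Mf) + Mf * M) * |τ - t| := by
        calc |(-(v z τ - v z t) * ((deriv (fun s => v z s) τ
              + deriv (fun s => v z s) t)/2 - (f (v z τ) + f (v z t))/2)
              - ((∫ s in (0:ℝ)..(v z τ), f s) - ∫ s in (0:ℝ)..(v z t), f s))|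
            ≤ |(-(v z τ - v z t)) * ((deriv (fun s => v z s) τ
              + deriv (fun s => v z s) t)/2 - (f (v z τ) + f (v z t))/2)|
              + |(∫ s in (0:ℝ)..(v z τ), f s) - ∫ s in (0:ℝ)..(v z t), f s| := abs_sub _ _
          _ = |v z τ - v z t| * |(deriv (fun s => v z s) τ
              + deriv (fun s => v z s) t)/2 - (f (v z τ) + f (v z t))/2|
              + |(∫ s in (0:ℝ)..(v z τ), f s) - ∫ s in (0:ℝ)..(v z t), f s| := by
                rw [abs_mul, abs_neg]
          _ ≤ (M * |τ - t|) * (M + Mf) + Mf * M * |τ - t| := by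
              have := mul_le_mul h1 hA (abs_nonneg _) (by positivity)
              linarith
          _ = (M * (M + Mf) + Mf * M) * |τ - t| := by ring
      rw [Real.norm_eq_abs, abs_mul, abs_mul, abs_inv, abs_of_pos h8]
      calc |τ - t|⁻¹ * (|(-(v z τ - v z t) * ((deriv (fun s => v z s) τ
            + deriv (fun s => v z s) t)/2 - (f (v z τ) + f (v z t))/2)
            - ((∫ s in (0:ℝ)..(v z τ), f s) - ∫ s in (0:ℝ)..(v z t), f s))|
            * Real.exp (c*z))
          ≤ |τ - t|⁻¹ * (((M * (M + Mf) + Mf * M) * |τ - t|) * K) := by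
            apply mul_le_mul_of_nonneg_left _ (by positivity)
            apply mul_le_mul hXbound h7 (le_of_lt h8) (by positivity)
        _ = (M * (M + Mf) + Mf * M) * K := by
            field_simp
    · exact intervalIntegrable_const
    · -- pointwise limits
      refine MeasureTheory.ae_of_all _ (fun z hz => ?_)
      have hzI : z ∈ Icc a b := hIab hz
      have heqfun : (fun τ => (τ - t)⁻¹ *
          ((-(v z τ - v z t) * ((deriv (fun s => v z s) τ + deriv (fun s => v z s) t)/2
              - (f (v z τ) + f (v z t))/2)
            - ((∫ s in (0:ℝ)..(v z τ), f s) - ∫ s in (0:ℝ)..(v z t), f s))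
            * Real.exp (c * z)))
          = fun τ => (-(slope (fun s => v z s) t τ) *
              ((deriv (fun s => v z s) τ + deriv (fun s => v z s) t)/2
                - (f (v z τ) + f (v z t))/2)
            - slope (fun s => ∫ u in (0:ℝ)..(v z s), f u) t τ) * Real.exp (c * z) := by
        funext τ
        rw [slope_def_field, slope_def_field]
        ring
      rw [heqfun]
      have hT1 := hslopeV z hzI
      have hT2 := htendVt z hzI
      have hT3 := htendfv z hzI
      have hT4 := hslopeF z hzI
      have hfin := ((hT1.neg.mul (((hT2.add
          (tendsto_const_nhds (x := deriv (fun s => v z s) t))).div_const 2).sub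
        ((hT3.add (tendsto_const_nhds (x := f (v z t)))).div_const 2))).sub hT4).mul
        (tendsto_const_nhds (x := Real.exp (c*z)))
      convert hfin using 2
      ring
  -- finish
  constructor
  · rw [hasDerivWithinAt_iff_tendsto_slope]
    rw [intervalIntegral.integral_neg] at hDCT
    refine Tendsto.congr' ?_ hDCT
    filter_upwards [self_mem_nhdsWithin] with τ hτ
    have hτIcc : τ ∈ Icc (0:ℝ) T := hτ.1
    rw [slope_def_field, key τ hτIcc, intervalIntegral.integral_const_mul]
    rw [div_eq_inv_mul]
  · rw [neg_nonpos]
    apply intervalIntegral.integral_nonneg hab.le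
    intro z _
    positivity
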